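/- The family of behaviors of spliffers is not closed under complementation: over the alphabet A = {a,b} (a ≠ b), there exists a set X ⊆ U that is the behavior of a spliffer with finitely many states such that the complement U \ X is not the behavior of any spliffer with finitely many states. -/

import Mathlib

/-- Words over the alphabet `A`, i.e. elements of the free monoid `A*`. -/
abbrev Word (A : Type) := List A

/-- The generating set `G = {(a,ε,a) : a ∈ A} ∪ {(ε,a,a) : a ∈ A}` of the
Shuffling Monoid. -/
def genG (A : Type) : Set (Word A × Word A × Word A) :=
  {g | ∃ a : A, g = ([a], [], [a]) ∨ g = ([], [a], [a])}

/-- Componentwise product (concatenation) of a list of triples of words. -/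
def prodTriple {A : Type} (ls : List (Word A × Word A × Word A)) :
    Word A × Word A × Word A :=
  ((ls.map fun l => l.1).flatten, (ls.map fun l => l.2.1).flatten,
    (ls.map fun l => l.2.2).flatten)

/-- The Shuffling Monoid `U`: the submonoid of `A* × A* × A*` generated by `G`,
described as the set of all products of finite sequences of generators. -/
def shuffleU (A : Type) : Set (Word A × Word A × Word A) :=
  {m | ∃ ls : List (Word A × Word A × Word A), (∀ l ∈ ls, l ∈ genG A) ∧ prodTriple ls = m}

/-- A spliffer (equivalently, splitter) over `A`: a finite automaton whose
transitions are labeled by elements of `G`. -/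
structure Spliffer (A : Type) where
  Q : Type
  finQ : Finite Q
  E : Q → (Word A × Word A × Word A) → Q → Prop
  I : Set Q
  T : Set Q
  labels_mem : ∀ {q l q'}, E q l q' → l ∈ genG A

/-- Paths in a spliffer, recording the sequence of labels. -/
inductive Spliffer.Path {A : Type} (S : Spliffer A) :
    S.Q → List (Word A × Word A × Word A) → S.Q → Prop
  | nil (q : S.Q) : Spliffer.Path S q [] q
  | cons {q q' q'' : S.Q} {l : Word A × Word A × Word A}
      {ls : List (Word A × Word A × Word A)} :
      S.E q l q' → Spliffer.Path S q' ls q'' → Spliffer.Path S q (l :: ls) q''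

/-- The behavior `|S|` of a spliffer: products of the label sequences of all
successful runs. -/
def Spliffer.behavior {A : Type} (S : Spliffer A) : Set (Word A × Word A × Word A) :=
  {m | ∃ q ∈ S.I, ∃ q' ∈ S.T, ∃ ls, S.Path q ls q' ∧ prodTriple ls = m}

/-- A splitter is deterministic if it has a single initial state, for every state
and input letter there is at most one outgoing transition reading that letter,
and all transitions leaving a given state write to the same tape. -/
def Spliffer.Deterministic {A : Type} (S : Spliffer A) : Prop :=
  (∃! i, i ∈ S.I) ∧
  (∀ ⦃q l₁ q₁ l₂ q₂⦄, S.E q l₁ q₁ → S.E q l₂ q₂ → l₁.2.2 = l₂.2.2 → l₁ = l₂ ∧ q₁ = q₂) ∧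
  (∀ ⦃q l₁ q₁ l₂ q₂⦄, S.E q l₁ q₁ → S.E q l₂ q₂ →
    (l₁.1 = [] ∧ l₂.1 = []) ∨ (l₁.2.1 = [] ∧ l₂.2.1 = []))

set_option maxHeartbeats 1000000

namespace RatComplAux

variable {A : Type}

/-! ### generators -/

def g1 (c : A) : Word A × Word A × Word A := ([c], [], [c])
def g2 (c : A) : Word A × Word A × Word A := ([], [c], [c])

lemma g1_mem (c : A) : g1 c ∈ genG A := ⟨c, Or.inl rfl⟩
lemma g2_mem (c : A) : g2 c ∈ genG A := ⟨c, Or.inr rfl⟩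

/-! ### prodTriple lemmas -/

lemma prodTriple_nil : prodTriple ([] : List (Word A × Word A × Word A)) = ([], [], []) := rfl

lemma prodTriple_cons (x : Word A × Word A × Word A) (ls : List (Word A × Word A × Word A)) :
    prodTriple (x :: ls) =
      (x.1 ++ (prodTriple ls).1, x.2.1 ++ (prodTriple ls).2.1, x.2.2 ++ (prodTriple ls).2.2) := by
  simp [prodTriple]

lemma prodTriple_append (xs ys : List (Word A × Word A × Word A)) :
    prodTriple (xs ++ ys) =
      ((prodTriple xs).1 ++ (prodTriple ys).1, (prodTriple xs).2.1 ++ (prodTriple ys).2.1,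
        (prodTriple xs).2.2 ++ (prodTriple ys).2.2) := by
  simp [prodTriple]

lemma prodTriple_rep_g1 (n : ℕ) (c : A) :
    prodTriple (List.replicate n (g1 c)) = (List.replicate n c, [], List.replicate n c) := by
  induction n with
  | zero => rfl
  | succ n ih => rw [List.replicate_succ, prodTriple_cons, ih]; simp [g1, List.replicate_succ]

lemma prodTriple_rep_g2 (n : ℕ) (c : A) :
    prodTriple (List.replicate n (g2 c)) = ([], List.replicate n c, List.replicate n c) := by
  induction n with
  | zero => rfl
  | succ n ih => rw [List.replicate_succ, prodTriple_cons, ih]; simp [g2, List.replicate_succ]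

/-! ### path lemmas -/

lemma path_append {S : Spliffer A} {q r q' : S.Q} {xs ys : List (Word A × Word A × Word A)}
    (h1 : S.Path q xs r) (h2 : S.Path r ys q') : S.Path q (xs ++ ys) q' := by
  induction h1 with
  | nil q => simpa using h2
  | cons e _ ih => exact Spliffer.Path.cons e (ih h2)

lemma path_replicate {S : Spliffer A} {q : S.Q} {g} (h : S.E q g q) (n : ℕ) :
    S.Path q (List.replicate n g) q := by
  induction n with
  | zero => exact Spliffer.Path.nil q
  | succ n ih => rw [List.replicate_succ]; exact Spliffer.Path.cons h ih

lemma labels_of_path {S : Spliffer A} {q q' : S.Q} {ls} (h : S.Path q ls q') :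
    ∀ l ∈ ls, l ∈ genG A := by
  induction h with
  | nil => intro l hl; cases hl
  | cons e _ ih =>
    intro l hl
    rcases List.mem_cons.mp hl with rfl | hl
    · exact S.labels_mem e
    · exact ih l hl

lemma behavior_subset_shuffleU (S : Spliffer A) : S.behavior ⊆ shuffleU A := by
  rintro t ⟨q, _, q', _, ls, hp, rfl⟩
  exact ⟨ls, labels_of_path hp, rfl⟩

/-! ### pumping -/

lemma chain_of_path {S : Spliffer A} {g} :
    ∀ {n : ℕ} {q q'' : S.Q} {rest}, S.Path q (List.replicate n g ++ rest) q'' →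
      ∃ s : ℕ → S.Q, s 0 = q ∧ (∀ i < n, S.E (s i) g (s (i + 1))) ∧ S.Path (s n) rest q'' := by
  intro n
  induction n with
  | zero =>
    intro q q'' rest h
    exact ⟨fun _ => q, rfl, fun i hi => absurd hi (by omega), by simpa using h⟩
  | succ n ih =>
    intro q q'' rest h
    rw [List.replicate_succ, List.cons_append] at h
    cases h with
    | cons e p =>
      obtain ⟨s, hs0, hsE, hsP⟩ := ih p
      refine ⟨fun i => Nat.casesOn i q (fun j => s j), rfl, ?_, hsP⟩
      intro i hi
      cases i with
      | zero => show S.E q g (s 0); rw [hs0]; exact e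
      | succ j => exact hsE j (by omega)

lemma path_of_chain {S : Spliffer A} {g} {s : ℕ → S.Q} {n : ℕ}
    (hc : ∀ i < n, S.E (s i) g (s (i + 1))) :
    ∀ (k i : ℕ), i + k ≤ n → S.Path (s i) (List.replicate k g) (s (i + k)) := by
  intro k
  induction k with
  | zero => intro i _; simpa using Spliffer.Path.nil (s i)
  | succ k ih =>
    intro i hi
    rw [List.replicate_succ]
    have e := hc i (by omega)
    have p := ih (i + 1) (by omega)
    rw [show i + (k + 1) = (i + 1) + k from by omega]
    exact Spliffer.Path.cons e p

lemma pump_aux {S : Spliffer A} {q q'' : S.Q} {g} {n : ℕ} {rest} {s : ℕ → S.Q}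
    (hs0 : s 0 = q) (hsE : ∀ i < n, S.E (s i) g (s (i + 1)))
    (hsP : S.Path (s n) rest q'') {i j : ℕ} (hij : i < j) (hj : j < n + 1)
    (heq : s i = s j) :
    ∃ d, 0 < d ∧ S.Path q (List.replicate (n + d) g ++ rest) q'' := by
  set d := j - i with hd
  have P1 : S.Path (s 0) (List.replicate i g) (s i) := by
    have := path_of_chain hsE i 0 (by omega)
    simpa using this
  have P2 : S.Path (s i) (List.replicate d g) (s (i + d)) :=
    path_of_chain hsE d i (by omega)
  have P2' : S.Path (s i) (List.replicate d g) (s i) := by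
    rw [show i + d = j from by omega, ← heq] at P2; exact P2
  have P3 : S.Path (s j) (List.replicate (n - j) g) (s (j + (n - j))) :=
    path_of_chain hsE (n - j) j (by omega)
  have P3' : S.Path (s i) (List.replicate (n - j) g) (s n) := by
    rw [show j + (n - j) = n from by omega] at P3; rw [heq]; exact P3
  refine ⟨d, by omega, ?_⟩
  have hlist : List.replicate (n + d) g ++ rest =
      List.replicate i g ++ (List.replicate d g ++ (List.replicate d g ++
        (List.replicate (n - j) g ++ rest))) := by
    rw [show n + d = i + (d + (d + (n - j))) from by omega,
        List.replicate_add, List.replicate_add, List.replicate_add, List.append_assoc,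
        List.append_assoc, List.append_assoc]
  rw [hlist]
  have := path_append P1 (path_append P2' (path_append P2' (path_append P3' hsP)))
  rw [hs0] at this
  exact this

lemma pump {S : Spliffer A} [Fintype S.Q] {q q'' : S.Q} {g} {n : ℕ} {rest}
    (h : S.Path q (List.replicate n g ++ rest) q'') (hn : Fintype.card S.Q < n) :
    ∃ d, 0 < d ∧ S.Path q (List.replicate (n + d) g ++ rest) q'' := by
  obtain ⟨s, hs0, hsE, hsP⟩ := chain_of_path h
  obtain ⟨i, j, hne, heq⟩ :=
    Fintype.exists_ne_map_eq_of_card_lt (fun i : Fin (n + 1) => s i)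
      (by rw [Fintype.card_fin]; omega)
  rcases Nat.lt_or_ge i.val j.val with hlt | hge
  · exact pump_aux hs0 hsE hsP hlt j.isLt heq
  · have hlt : j.val < i.val := by
      rcases Nat.lt_or_ge j.val i.val with h' | h'
      · exact h'
      · exact absurd (Fin.ext (by omega)) hne
    exact pump_aux hs0 hsE hsP hlt i.isLt heq.symm

/-! ### forced runs -/

lemma pt_nil_of_w_nil {t : List (Word A × Word A × Word A)} (hmem : ∀ l ∈ t, l ∈ genG A)
    (h : (prodTriple t).2.2 = []) : t = [] := by
  cases t with
  | nil => rfl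
  | cons g t =>
    obtain ⟨c, hc | hc⟩ := hmem g List.mem_cons_self <;>
      (subst hc; rw [prodTriple_cons] at h; simp at h)

lemma only_g1 (a b : A) (hab : a ≠ b) :
    ∀ (ls : List (Word A × Word A × Word A)) (n r : ℕ),
      (∀ l ∈ ls, l ∈ genG A) →
      prodTriple ls = (List.replicate n a ++ [b], [], List.replicate r a ++ [b]) →
      r = n ∧ ls = List.replicate n (g1 a) ++ [g1 b] := by
  intro ls
  induction ls with
  | nil =>
    intro n r _ h
    rw [prodTriple_nil, Prod.ext_iff, Prod.ext_iff] at h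
    exact absurd h.1 (by simp)
  | cons g t ih =>
    intro n r hmem h
    have hmemt : ∀ l ∈ t, l ∈ genG A := fun l hl => hmem l (List.mem_cons_of_mem _ hl)
    obtain ⟨c, hc | hc⟩ := hmem g List.mem_cons_self
    · subst hc
      rw [prodTriple_cons, Prod.ext_iff, Prod.ext_iff] at h
      obtain ⟨h1, h2, h3⟩ := h
      simp only [List.singleton_append] at h1 h3
      simp only [List.nil_append] at h2
      cases n with
      | zero =>
        rw [List.replicate_zero, List.nil_append] at h1
        obtain ⟨rfl, hu⟩ := List.cons_eq_cons.mp h1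
        cases r with
        | succ r' =>
          rw [List.replicate_succ, List.cons_append] at h3
          exact absurd (List.cons_eq_cons.mp h3).1 hab.symm
        | zero =>
          rw [List.replicate_zero, List.nil_append] at h3
          obtain ⟨-, hw⟩ := List.cons_eq_cons.mp h3
          have := pt_nil_of_w_nil hmemt hw
          subst this
          exact ⟨rfl, rfl⟩
      | succ n' =>
        rw [List.replicate_succ, List.cons_append] at h1
        obtain ⟨rfl, hu⟩ := List.cons_eq_cons.mp h1
        cases r with
        | zero =>
          rw [List.replicate_zero, List.nil_append] at h3
          exact absurd (List.cons_eq_cons.mp h3).1 hab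
        | succ r' =>
          rw [List.replicate_succ, List.cons_append] at h3
          obtain ⟨-, hw⟩ := List.cons_eq_cons.mp h3
          obtain ⟨hr, ht⟩ := ih n' r' hmemt
            (by rw [Prod.ext_iff, Prod.ext_iff]; exact ⟨hu, h2, hw⟩)
          subst ht
          refine ⟨by omega, ?_⟩
          rw [List.replicate_succ, List.cons_append]
          rfl
    · subst hc
      rw [prodTriple_cons, Prod.ext_iff, Prod.ext_iff] at h
      exact absurd h.2.1 (by simp)

lemma forcing (a b : A) (hab : a ≠ b) :
    ∀ (ls : List (Word A × Word A × Word A)) (n m k r : ℕ),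
      (∀ l ∈ ls, l ∈ genG A) → k < n →
      prodTriple ls = (List.replicate n a ++ [b], List.replicate m a ++ [b],
        List.replicate k a ++ [b] ++ List.replicate r a ++ [b]) →
      ∃ B, (∀ x ∈ B, x = g1 a ∨ x = g2 a) ∧
        (prodTriple B).1 = List.replicate (k - m) a ∧
        (prodTriple B).2.1 = List.replicate m a ∧
        m ≤ k ∧ k - m + r = n ∧
        ls = B ++ g2 b :: (List.replicate r (g1 a) ++ [g1 b]) := by
  intro ls
  induction ls with
  | nil =>
    intro n m k r _ _ h
    rw [prodTriple_nil, Prod.ext_iff, Prod.ext_iff] at h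
    exact absurd h.1 (by simp)
  | cons g t ih =>
    intro n m k r hmem hkn h
    have hmemt : ∀ l ∈ t, l ∈ genG A := fun l hl => hmem l (List.mem_cons_of_mem _ hl)
    obtain ⟨c, hc | hc⟩ := hmem g List.mem_cons_self
    · -- g = g1 c : a tape-1 move
      subst hc
      rw [prodTriple_cons, Prod.ext_iff, Prod.ext_iff] at h
      obtain ⟨h1, h2, h3⟩ := h
      simp only [List.singleton_append] at h1 h3
      simp only [List.nil_append] at h2
      obtain ⟨n', rfl⟩ : ∃ n', n = n' + 1 := ⟨n - 1, by omega⟩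
      rw [List.replicate_succ, List.cons_append] at h1
      obtain ⟨rfl, hu⟩ := List.cons_eq_cons.mp h1
      cases k with
      | zero =>
        rw [List.replicate_zero, List.nil_append] at h3
        simp only [List.cons_append, List.nil_append] at h3
        exact absurd (List.cons_eq_cons.mp h3).1 hab
      | succ k' =>
        rw [List.replicate_succ] at h3
        simp only [List.cons_append] at h3
        obtain ⟨-, hw⟩ := List.cons_eq_cons.mp h3
        obtain ⟨B, hBmem, hB1, hB2, hmk, harith, hls⟩ := ih n' m k' r hmemt (by omega)
          (by rw [Prod.ext_iff, Prod.ext_iff]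
              refine ⟨hu, h2, ?_⟩
              simpa only [List.cons_append] using hw)
        refine ⟨g1 c :: B, ?_, ?_, ?_, by omega, by omega, ?_⟩
        · rintro x hx
          rcases List.mem_cons.mp hx with rfl | hx
          · exact Or.inl rfl
          · exact hBmem x hx
        · rw [prodTriple_cons]
          show [c] ++ (prodTriple B).1 = _
          rw [hB1, show k' + 1 - m = (k' - m) + 1 from by omega, List.replicate_succ]
          rfl
        · rw [prodTriple_cons]
          show [] ++ (prodTriple B).2.1 = _
          rw [hB2]; rfl
        · rw [hls]; rfl
    · -- g = g2 c : a tape-2 move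
      subst hc
      rw [prodTriple_cons, Prod.ext_iff, Prod.ext_iff] at h
      obtain ⟨h1, h2, h3⟩ := h
      simp only [List.singleton_append] at h2 h3
      simp only [List.nil_append] at h1
      cases m with
      | zero =>
        rw [List.replicate_zero, List.nil_append] at h2
        obtain ⟨rfl, hv⟩ := List.cons_eq_cons.mp h2
        cases k with
        | succ k' =>
          rw [List.replicate_succ] at h3
          simp only [List.cons_append] at h3
          exact absurd (List.cons_eq_cons.mp h3).1.symm hab
        | zero =>
          rw [List.replicate_zero, List.nil_append] at h3
          simp only [List.cons_append, List.nil_append] at h3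
          obtain ⟨-, hw⟩ := List.cons_eq_cons.mp h3
          obtain ⟨hr, ht⟩ := only_g1 a c hab t n r hmemt
            (by rw [Prod.ext_iff, Prod.ext_iff]; exact ⟨h1, hv, hw⟩)
          subst hr
          refine ⟨[], ?_, by simp [prodTriple_nil], by simp [prodTriple_nil], le_rfl,
            by omega, ?_⟩
          · intro x hx; cases hx
          · rw [ht]; rfl
      | succ m' =>
        rw [List.replicate_succ, List.cons_append] at h2
        obtain ⟨rfl, hv⟩ := List.cons_eq_cons.mp h2
        cases k with
        | zero =>
          rw [List.replicate_zero, List.nil_append] at h3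
          simp only [List.cons_append, List.nil_append] at h3
          exact absurd (List.cons_eq_cons.mp h3).1 hab
        | succ k' =>
          rw [List.replicate_succ] at h3
          simp only [List.cons_append] at h3
          obtain ⟨-, hw⟩ := List.cons_eq_cons.mp h3
          obtain ⟨B, hBmem, hB1, hB2, hmk, harith, hls⟩ := ih n m' k' r hmemt (by omega)
            (by rw [Prod.ext_iff, Prod.ext_iff]
                refine ⟨h1, hv, ?_⟩
                simpa only [List.cons_append] using hw)
          refine ⟨g2 c :: B, ?_, ?_, ?_, by omega, by omega, ?_⟩
          · rintro x hx
            rcases List.mem_cons.mp hx with rfl | hx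
            · exact Or.inr rfl
            · exact hBmem x hx
          · rw [prodTriple_cons]
            show [] ++ (prodTriple B).1 = _
            rw [hB1, show k' + 1 - (m' + 1) = k' - m' from by omega]
            rfl
          · rw [prodTriple_cons]
            show [c] ++ (prodTriple B).2.1 = _
            rw [hB2, List.replicate_succ]
            rfl
          · rw [hls]; rfl


lemma all_g2 (a : A) :
    ∀ (B : List (Word A × Word A × Word A)) (m : ℕ),
      (∀ x ∈ B, x = g1 a ∨ x = g2 a) →
      (prodTriple B).1 = [] →
      (prodTriple B).2.1 = List.replicate m a →
      B = List.replicate m (g2 a) := by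
  intro B
  induction B with
  | nil =>
    intro m _ _ h2
    have hm : m = 0 := by
      cases m with
      | zero => rfl
      | succ m => rw [List.replicate_succ] at h2; exact absurd h2 (by simp [prodTriple_nil])
    subst hm; rfl
  | cons x B ih =>
    intro m hmem h1 h2
    rcases hmem x List.mem_cons_self with rfl | rfl
    · rw [prodTriple_cons] at h1
      exact absurd h1 (by simp [g1])
    · rw [prodTriple_cons] at h1 h2
      simp only [g2, List.nil_append, List.singleton_append] at h1 h2
      cases m with
      | zero => rw [List.replicate_zero] at h2; exact absurd h2 (by simp)
      | succ m' =>
        rw [List.replicate_succ] at h2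
        obtain ⟨-, hv⟩ := List.cons_eq_cons.mp h2
        rw [List.replicate_succ,
          ih m' (fun y hy => hmem y (List.mem_cons_of_mem _ hy)) h1 hv]

lemma rep_cancel (a b : A) (hab : a ≠ b) :
    ∀ (k j : ℕ) (t t' : List A),
      List.replicate k a ++ b :: t = List.replicate j a ++ b :: t' → k = j ∧ t = t' := by
  intro k
  induction k with
  | zero =>
    intro j t t' h
    cases j with
    | zero =>
      simp only [List.replicate_zero, List.nil_append] at h
      exact ⟨rfl, (List.cons_eq_cons.mp h).2⟩
    | succ j =>
      rw [List.replicate_zero, List.nil_append, List.replicate_succ, List.cons_append] at h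
      exact absurd (List.cons_eq_cons.mp h).1 hab.symm
  | succ k ih =>
    intro j t t' h
    cases j with
    | zero =>
      rw [List.replicate_zero, List.nil_append, List.replicate_succ, List.cons_append] at h
      exact absurd (List.cons_eq_cons.mp h).1 hab
    | succ j =>
      rw [List.replicate_succ, List.cons_append, List.replicate_succ, List.cons_append] at h
      obtain ⟨e, he⟩ := ih j t t' (List.cons_eq_cons.mp h).2
      exact ⟨by omega, he⟩

lemma mix_counts (a : A) :
    ∀ (P : List (Word A × Word A × Word A)),
      (∀ x ∈ P, x = g1 a ∨ x = g2 a) →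
      ∃ x y, (prodTriple P).1 = List.replicate x a ∧
        (prodTriple P).2.1 = List.replicate y a ∧
        (prodTriple P).2.2 = List.replicate (x + y) a := by
  intro P
  induction P with
  | nil => exact fun _ => ⟨0, 0, rfl, rfl, rfl⟩
  | cons g P ih =>
    intro hmem
    obtain ⟨x, y, hx, hy, hw⟩ := ih (fun l hl => hmem l (List.mem_cons_of_mem _ hl))
    rcases hmem g List.mem_cons_self with rfl | rfl
    · refine ⟨x + 1, y, ?_, ?_, ?_⟩
      · rw [prodTriple_cons]
        show [a] ++ (prodTriple P).1 = _
        rw [hx, List.replicate_succ]; rfl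
      · rw [prodTriple_cons]
        show [] ++ (prodTriple P).2.1 = _
        rw [hy]; rfl
      · rw [prodTriple_cons]
        show [a] ++ (prodTriple P).2.2 = _
        rw [hw, show x + 1 + y = (x + y) + 1 from by omega, List.replicate_succ]; rfl
    · refine ⟨x, y + 1, ?_, ?_, ?_⟩
      · rw [prodTriple_cons]
        show [] ++ (prodTriple P).1 = _
        rw [hx]; rfl
      · rw [prodTriple_cons]
        show [a] ++ (prodTriple P).2.1 = _
        rw [hy, List.replicate_succ]; rfl
      · rw [prodTriple_cons]
        show [a] ++ (prodTriple P).2.2 = _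
        rw [hw, show x + (y + 1) = (x + y) + 1 from by omega, List.replicate_succ]; rfl


/-! ### the example spliffer and its behavior -/

def myX (a b : A) : Set (Word A × Word A × Word A) :=
  {t | ∃ n m k : ℕ, n ≤ k ∧ k ≤ n + m ∧
    t = (List.replicate n a ++ [b], List.replicate m a ++ [b],
         List.replicate k a ++ [b] ++ List.replicate (n + m - k) a ++ [b])}

def myS (a b : A) : Spliffer A where
  Q := Fin 3
  finQ := inferInstance
  E := fun q l q' =>
    (q = 0 ∧ q' = 0 ∧ (l = g1 a ∨ l = g2 a)) ∨
    (q = 0 ∧ q' = 1 ∧ l = g1 b) ∨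
    (q = 1 ∧ q' = 1 ∧ l = g2 a) ∨
    (q = 1 ∧ q' = 2 ∧ l = g2 b)
  I := {0}
  T := {2}
  labels_mem := by
    rintro q l q' (⟨-, -, rfl | rfl⟩ | ⟨-, -, rfl⟩ | ⟨-, -, rfl⟩ | ⟨-, -, rfl⟩)
    exacts [g1_mem a, g2_mem a, g1_mem b, g2_mem a, g2_mem b]

lemma E00a (a b : A) : (myS a b).E (0 : Fin 3) (g1 a) (0 : Fin 3) := Or.inl ⟨rfl, rfl, Or.inl rfl⟩
lemma E00a2 (a b : A) : (myS a b).E (0 : Fin 3) (g2 a) (0 : Fin 3) := Or.inl ⟨rfl, rfl, Or.inr rfl⟩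
lemma E01b (a b : A) : (myS a b).E (0 : Fin 3) (g1 b) (1 : Fin 3) := Or.inr (Or.inl ⟨rfl, rfl, rfl⟩)
lemma E11 (a b : A) : (myS a b).E (1 : Fin 3) (g2 a) (1 : Fin 3) := Or.inr (Or.inr (Or.inl ⟨rfl, rfl, rfl⟩))
lemma E12 (a b : A) : (myS a b).E (1 : Fin 3) (g2 b) (2 : Fin 3) := Or.inr (Or.inr (Or.inr ⟨rfl, rfl, rfl⟩))

lemma X_sub_beh (a b : A) : myX a b ⊆ (myS a b).behavior := by
  rintro t ⟨n, m, k, h1, h2, rfl⟩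
  refine ⟨(0 : Fin 3), rfl, (2 : Fin 3), rfl,
    List.replicate n (g1 a) ++ (List.replicate (k - n) (g2 a) ++ (g1 b ::
      (List.replicate (n + m - k) (g2 a) ++ [g2 b]))), ?_, ?_⟩
  · exact path_append (path_replicate (E00a a b) n)
      (path_append (path_replicate (E00a2 a b) (k - n))
        (Spliffer.Path.cons (E01b a b)
          (path_append (path_replicate (E11 a b) (n + m - k))
            (Spliffer.Path.cons (E12 a b) (Spliffer.Path.nil (S := myS a b) (2 : Fin 3))))))
  · rw [prodTriple_append, prodTriple_append, prodTriple_cons, prodTriple_append,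
        prodTriple_cons, prodTriple_nil, prodTriple_rep_g1, prodTriple_rep_g2,
        prodTriple_rep_g2]
    rw [Prod.ext_iff, Prod.ext_iff]
    refine ⟨?_, ?_, ?_⟩
    · simp [g1, g2]
    · show [] ++ (List.replicate (k-n) a ++ ([] ++ (List.replicate (n+m-k) a ++ ([b] ++ [])))) = _
      simp only [List.nil_append, List.append_nil, ← List.append_assoc, ← List.replicate_add]
      rw [show k - n + (n + m - k) = m from by omega]
    · show List.replicate n a ++ (List.replicate (k-n) a ++ ([b] ++ (List.replicate (n+m-k) a ++ ([b] ++ [])))) = _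
      simp only [List.append_nil, List.singleton_append, List.cons_append, List.nil_append,
        List.append_assoc]
      rw [← List.append_assoc, ← List.replicate_add, show n + (k - n) = k from by omega]

lemma from2 (a b : A) : ∀ {ls} {q₀ q' : (myS a b).Q}, (myS a b).Path q₀ ls q' → q₀ = (2 : Fin 3) →
    ls = [] ∧ q' = (2 : Fin 3) := by
  intro ls q₀ q' h
  induction h with
  | nil q => exact fun hq => ⟨rfl, hq⟩
  | cons e p ih =>
    intro hq
    rw [hq] at e
    rcases e with ⟨h, -⟩ | ⟨h, -⟩ | ⟨h, -⟩ | ⟨h, -⟩ <;> exact absurd h (by decide)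

lemma from1 (a b : A) : ∀ {ls} {q₀ q' : (myS a b).Q}, (myS a b).Path q₀ ls q' → q₀ = (1 : Fin 3) →
    (q' = (1 : Fin 3) ∧ ∃ s, ls = List.replicate s (g2 a)) ∨
    (q' = (2 : Fin 3) ∧ ∃ s, ls = List.replicate s (g2 a) ++ [g2 b]) := by
  intro ls q₀ q' h
  induction h with
  | nil q => exact fun hq => Or.inl ⟨hq, 0, rfl⟩
  | cons e p ih =>
    intro hq
    rw [hq] at e
    rcases e with ⟨h, -⟩ | ⟨h, -⟩ | ⟨-, rfl, rfl⟩ | ⟨-, rfl, rfl⟩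
    · exact absurd h (by decide)
    · exact absurd h (by decide)
    · rcases ih rfl with ⟨hq, s, rfl⟩ | ⟨hq, s, rfl⟩
      · exact Or.inl ⟨hq, s + 1, by rw [List.replicate_succ]⟩
      · exact Or.inr ⟨hq, s + 1, by rw [List.replicate_succ, List.cons_append]⟩
    · obtain ⟨rfl, hq⟩ := from2 a b p rfl
      exact Or.inr ⟨hq, 0, rfl⟩

lemma from0 (a b : A) : ∀ {ls} {q₀ q' : (myS a b).Q}, (myS a b).Path q₀ ls q' → q₀ = (0 : Fin 3) →
    (q' = (0 : Fin 3) ∧ ∀ x ∈ ls, x = g1 a ∨ x = g2 a) ∨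
    (∃ P suf, (∀ x ∈ P, x = g1 a ∨ x = g2 a) ∧ ls = P ++ g1 b :: suf ∧
      ((q' = (1 : Fin 3) ∧ ∃ s, suf = List.replicate s (g2 a)) ∨
       (q' = (2 : Fin 3) ∧ ∃ s, suf = List.replicate s (g2 a) ++ [g2 b]))) := by
  intro ls q₀ q' h
  induction h with
  | nil q => exact fun hq => Or.inl ⟨hq, by intro x hx; cases hx⟩
  | cons e p ih =>
    intro hq
    rw [hq] at e
    rcases e with ⟨-, rfl, hl⟩ | ⟨-, rfl, rfl⟩ | ⟨h, -⟩ | ⟨h, -⟩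
    · rcases ih rfl with ⟨hq, hmem⟩ | ⟨P, suf, hPmem, rfl, hrest⟩
      · refine Or.inl ⟨hq, ?_⟩
        intro x hx
        rcases List.mem_cons.mp hx with rfl | hx
        · exact hl
        · exact hmem x hx
      · refine Or.inr ⟨_ :: P, suf, ?_, by rw [List.cons_append], hrest⟩
        intro x hx
        rcases List.mem_cons.mp hx with rfl | hx
        · exact hl
        · exact hPmem x hx
    · exact Or.inr ⟨[], _, fun x hx => (List.not_mem_nil hx).elim, rfl, from1 a b p rfl⟩
    · exact absurd h (by decide)
    · exact absurd h (by decide)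

lemma beh_sub (a b : A) : (myS a b).behavior ⊆ myX a b := by
  rintro t ⟨q, hqI, q', hqT, ls, hp, rfl⟩
  have hq : q = (0 : Fin 3) := hqI
  have hq' : q' = (2 : Fin 3) := hqT
  subst hq; subst hq'
  rcases from0 a b hp rfl with ⟨hq, -⟩ | ⟨P, suf, hPmem, rfl, hrest⟩
  · exact absurd (congrArg Fin.val hq) (by decide)
  rcases hrest with ⟨hq, -⟩ | ⟨-, s, rfl⟩
  · exact absurd (congrArg Fin.val hq) (by decide)
  obtain ⟨x, y, hx, hy, hw⟩ := mix_counts a P hPmem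
  refine ⟨x, y + s, x + y, by omega, by omega, ?_⟩
  rw [prodTriple_append, prodTriple_cons, prodTriple_append, prodTriple_cons, prodTriple_nil,
      prodTriple_rep_g2]
  rw [Prod.ext_iff, Prod.ext_iff]
  simp only [g1, g2, List.append_nil, List.nil_append, List.append_assoc]
  refine ⟨?_, ?_, ?_⟩
  · rw [hx]
  · rw [hy, ← List.append_assoc, ← List.replicate_add]
  · rw [hw, show x + (y + s) - (x + y) = s from by omega]

end RatComplAux

open RatComplAux

/-- over `A = {a,b}`, the family of behaviors of spliffers is not
closed under complementation: some behavior `X ⊆ U` of a spliffer has a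
complement `U \ X` which is not the behavior of any spliffer. -/
theorem rat_not_closed_under_complement {A : Type} (a b : A) (hab : a ≠ b)
    (hA : ∀ x : A, x = a ∨ x = b) :
    ∃ X : Set (Word A × Word A × Word A), X ⊆ shuffleU A ∧
      (∃ S : Spliffer A, S.behavior = X) ∧
      ¬ ∃ S : Spliffer A, S.behavior = shuffleU A \ X := by
  classical
  refine ⟨myX a b, fun t ht => behavior_subset_shuffleU (myS a b) (X_sub_beh a b ht),
    ⟨myS a b, Set.Subset.antisymm (beh_sub a b) (X_sub_beh a b)⟩, ?_⟩
  rintro ⟨S', hS'⟩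
  haveI : Finite S'.Q := S'.finQ
  haveI : Fintype S'.Q := Fintype.ofFinite S'.Q
  set c := Fintype.card S'.Q with hc
  have hτU : (List.replicate (c+2) a ++ [b], List.replicate (c+1) a ++ [b],
      List.replicate (c+1) a ++ [b] ++ List.replicate (c+2) a ++ [b]) ∈ shuffleU A := by
    refine ⟨List.replicate (c+1) (g2 a) ++ (g2 b ::
      (List.replicate (c+2) (g1 a) ++ [g1 b])), ?_, ?_⟩
    · intro l hl
      rcases List.mem_append.mp hl with hl | hl
      · rw [List.eq_of_mem_replicate hl]; exact g2_mem a
      · rcases List.mem_cons.mp hl with rfl | hl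
        · exact g2_mem b
        · rcases List.mem_append.mp hl with hl | hl
          · rw [List.eq_of_mem_replicate hl]; exact g1_mem a
          · rw [List.mem_singleton.mp hl]; exact g1_mem b
    · rw [prodTriple_append, prodTriple_cons, prodTriple_append, prodTriple_cons,
          prodTriple_nil, prodTriple_rep_g1, prodTriple_rep_g2]
      rw [Prod.ext_iff, Prod.ext_iff]
      refine ⟨by simp [g1, g2], by simp [g1, g2], ?_⟩
      show List.replicate (c+1) a ++ ([b] ++ (List.replicate (c+2) a ++ ([b] ++ []))) = _
      simp [List.append_assoc]
  have hτX : (List.replicate (c+2) a ++ [b], List.replicate (c+1) a ++ [b],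
      List.replicate (c+1) a ++ [b] ++ List.replicate (c+2) a ++ [b]) ∉ myX a b := by
    rintro ⟨n, m, k, h1, h2, heq⟩
    rw [Prod.ext_iff, Prod.ext_iff] at heq
    obtain ⟨e1, e2, e3⟩ := heq
    have hn : c + 2 = n := (rep_cancel a b hab (c+2) n [] [] e1).1
    simp only [List.append_assoc, List.cons_append, List.singleton_append,
      List.nil_append] at e3
    have hk : c + 1 = k :=
      (rep_cancel a b hab (c+1) k _ _ e3).1
    omega
  have hτbeh : (List.replicate (c+2) a ++ [b], List.replicate (c+1) a ++ [b],
      List.replicate (c+1) a ++ [b] ++ List.replicate (c+2) a ++ [b]) ∈ S'.behavior := by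
    rw [hS']; exact ⟨hτU, hτX⟩
  obtain ⟨q, hqI, q', hqT, ls, hp, hpt⟩ := hτbeh
  obtain ⟨B, hBmem, hB1, hB2, hmk, harith, hls⟩ :=
    forcing a b hab ls (c+2) (c+1) (c+1) (c+2) (labels_of_path hp) (by omega) hpt
  have hB : B = List.replicate (c+1) (g2 a) :=
    all_g2 a B (c+1) hBmem (by rw [hB1]; simp) hB2
  rw [hB] at hls
  rw [hls] at hp
  obtain ⟨d, hd, hp'⟩ := pump hp (by omega)
  have hmem' : prodTriple (List.replicate (c+1+d) (g2 a) ++ (g2 b ::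
      (List.replicate (c+2) (g1 a) ++ [g1 b]))) ∈ myX a b := by
    rw [prodTriple_append, prodTriple_cons, prodTriple_append, prodTriple_cons,
        prodTriple_nil, prodTriple_rep_g1, prodTriple_rep_g2]
    refine ⟨c+2, c+1+d, c+1+d, by omega, by omega, ?_⟩
    rw [Prod.ext_iff, Prod.ext_iff]
    refine ⟨by simp [g1, g2], by simp [g1, g2], ?_⟩
    show List.replicate (c+1+d) a ++ ([b] ++ (List.replicate (c+2) a ++ ([b] ++ []))) = _
    rw [show c + 2 + (c+1+d) - (c+1+d) = c + 2 from by omega]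
    simp [List.append_assoc]
  have hmem'' : prodTriple (List.replicate (c+1+d) (g2 a) ++ (g2 b ::
      (List.replicate (c+2) (g1 a) ++ [g1 b]))) ∈ S'.behavior :=
    ⟨q, hqI, q', hqT, _, hp', rfl⟩
  rw [hS'] at hmem''
  exact hmem''.2 hmem'
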